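/- Let F be a piecewise translation of m = d+1 branches in ℝ^d whose translation vectors have rank d, and assume the torus rotation R : T → T, R(φ) = φ + π(v_0), is ergodic with respect to Haar measure on T. Define ξ(φ) = card(π^{-1}(φ) ∩ A) for φ ∈ T, where A is the attractor of F. Then ξ is constant for Haar-almost every φ ∈ T. -/

import Mathlib

open MeasureTheory Topology Filter Set

/-- A piecewise translation map (PWT) of `m` branches in `ℝ^d`: a region `Ω`
partitioned into regions `P 0, …, P (m-1)` with null boundaries and pairwise disjoint
interiors, together with translation vectors `v i` such that `P i + v i ⊆ Ω`, and a fixed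
measurable resolution `idx` of the ambiguity on overlapping boundaries. -/
structure PWT (d m : ℕ) where
  Om : Set (Fin d → ℝ)
  P : Fin m → Set (Fin d → ℝ)
  v : Fin m → (Fin d → ℝ)
  idx : (Fin d → ℝ) → Fin m
  compact_Om : IsCompact Om
  region_Om : Om = closure (interior Om)
  compact_P : ∀ i, IsCompact (P i)
  region_P : ∀ i, P i = closure (interior (P i))
  union_P : Om = ⋃ i, P i
  disj_P : ∀ i j, i ≠ j → interior (P i) ∩ interior (P j) = ∅
  null_bd_P : ∀ i, volume (frontier (P i)) = 0
  translate_mem : ∀ i, ∀ x ∈ P i, x + v i ∈ Om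
  idx_mem : ∀ x ∈ Om, x ∈ P (idx x)
  idx_meas : Measurable idx

namespace PWT

variable {d m : ℕ}

/-- The piecewise translation map `F(x) = x + v_{i(x)}`. -/
def F (T : PWT d m) (x : Fin d → ℝ) : Fin d → ℝ := x + T.v (T.idx x)

/-- `Ω_0 = Ω`, `Ω_{n+1} = closure (F(Ω_n))`. -/
def OmSeq (T : PWT d m) : ℕ → Set (Fin d → ℝ)
  | 0 => T.Om
  | n + 1 => closure (T.F '' T.OmSeq n)

/-- The attractor `A = ⋂ₙ Ω_n`. -/
def attractor (T : PWT d m) : Set (Fin d → ℝ) := ⋂ n, T.OmSeq n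

/-- The fate map `𝓕(x) = (i(x), i(F x), i(F² x), …)`. -/
def fate (T : PWT d m) (x : Fin d → ℝ) : ℕ → Fin m := fun n => T.idx (T.F^[n] x)

/-- The matrix whose columns are the lattice generators `v_1 - v_0, …, v_d - v_0`. -/
noncomputable def latMatrix (T : PWT d (d + 1)) : Matrix (Fin d) (Fin d) ℝ :=
  Matrix.of fun i j => (T.v j.succ - T.v 0) i

/-- The canonical projection `π : ℝ^d → T = ℝ^d/L ≅ (ℝ/ℤ)^d`, expressed in the
coordinates given by the lattice basis `v_1 - v_0, …, v_d - v_0` of `L`. -/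
noncomputable def torusProj (T : PWT d (d + 1)) (x : Fin d → ℝ) : Fin d → AddCircle (1 : ℝ) :=
  fun i => ((T.latMatrix⁻¹.mulVec x) i : AddCircle (1 : ℝ))

end PWT

namespace PWTAux

open PWT

variable {d : ℕ}

lemma one_le_norm_of_int_coords {w : Fin d → ℝ} (hw : w ≠ 0)
    (h : ∀ i, ∃ n : ℤ, (n : ℝ) = w i) : 1 ≤ ‖w‖ := by
  obtain ⟨i, hi⟩ : ∃ i, w i ≠ 0 := by
    by_contra h'; push_neg at h'; exact hw (funext h')
  obtain ⟨n, hn⟩ := h i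
  have hn0 : n ≠ 0 := by rintro rfl; exact hi (by exact_mod_cast hn.symm)
  have h1 : (1 : ℝ) ≤ |w i| := by
    rw [← hn]
    exact_mod_cast Int.one_le_abs hn0
  calc (1:ℝ) ≤ |w i| := h1
    _ = ‖w i‖ := (Real.norm_eq_abs _).symm
    _ ≤ ‖w‖ := norm_le_pi_norm w i

lemma coe_eq_coe_iff (a b : ℝ) : ((a : AddCircle (1:ℝ)) = (b : AddCircle (1:ℝ))) ↔
    ∃ n : ℤ, (n : ℝ) = a - b := by
  rw [← sub_eq_zero, ← QuotientAddGroup.mk_sub, AddCircle.coe_eq_zero_iff]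
  simp [zsmul_eq_mul]

variable (T : PWT d (d + 1))

lemma isUnit_latMatrix (hrank : LinearIndependent ℝ (fun i : Fin d => T.v i.succ - T.v 0)) :
    IsUnit T.latMatrix := by
  rw [← Matrix.linearIndependent_cols_iff_isUnit]
  exact hrank

lemma isUnit_det (h : IsUnit T.latMatrix) : IsUnit T.latMatrix.det :=
  (Matrix.isUnit_iff_isUnit_det _).mp h

lemma minv_mulVec_mulVec (h : IsUnit T.latMatrix) (x : Fin d → ℝ) :
    T.latMatrix⁻¹.mulVec (T.latMatrix.mulVec x) = x := by
  rw [Matrix.mulVec_mulVec, Matrix.nonsing_inv_mul _ (isUnit_det T h), Matrix.one_mulVec]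

lemma mulVec_minv_mulVec (h : IsUnit T.latMatrix) (x : Fin d → ℝ) :
    T.latMatrix.mulVec (T.latMatrix⁻¹.mulVec x) = x := by
  rw [Matrix.mulVec_mulVec, Matrix.mul_nonsing_inv _ (isUnit_det T h), Matrix.one_mulVec]

lemma minv_injective (h : IsUnit T.latMatrix) :
    Function.Injective (T.latMatrix⁻¹.mulVec) := by
  intro x y hxy
  have := congrArg (T.latMatrix.mulVec) hxy
  rwa [mulVec_minv_mulVec T h, mulVec_minv_mulVec T h] at this

lemma torusProj_add (x y : Fin d → ℝ) :
    T.torusProj (x + y) = T.torusProj x + T.torusProj y := by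
  funext i
  simp [PWT.torusProj, Matrix.mulVec_add]

lemma torusProj_eq_iff (x y : Fin d → ℝ) : T.torusProj x = T.torusProj y ↔
    ∀ i, ∃ n : ℤ, (n : ℝ) = T.latMatrix⁻¹.mulVec x i - T.latMatrix⁻¹.mulVec y i := by
  rw [funext_iff]
  exact forall_congr' fun i => coe_eq_coe_iff _ _

lemma torusProj_v (h : IsUnit T.latMatrix) (i : Fin (d + 1)) :
    T.torusProj (T.v i) = T.torusProj (T.v 0) := by
  induction i using Fin.cases with
  | zero => rfl
  | succ j =>
    rw [torusProj_eq_iff]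
    intro i0
    have hcol : T.v j.succ - T.v 0 = T.latMatrix.mulVec (Pi.single j 1) := by
      funext i1
      simp [Matrix.mulVec_single, PWT.latMatrix]
    have hsub : T.latMatrix⁻¹.mulVec (T.v j.succ) - T.latMatrix⁻¹.mulVec (T.v 0)
        = Pi.single j 1 := by
      rw [← Matrix.mulVec_sub, hcol, minv_mulVec_mulVec T h]
    have hsub' := congrFun hsub i0
    rw [Pi.sub_apply] at hsub'
    rw [hsub']
    by_cases hij : i0 = j
    · exact ⟨1, by simp [Pi.single_apply, hij]⟩
    · exact ⟨0, by simp [Pi.single_apply, hij]⟩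

lemma torusProj_F (h : IsUnit T.latMatrix) (x : Fin d → ℝ) :
    T.torusProj (T.F x) = T.torusProj x + T.torusProj (T.v 0) := by
  rw [PWT.F, torusProj_add, torusProj_v T h]

lemma isClosed_OmSeq : ∀ n, IsClosed (T.OmSeq n)
  | 0 => T.compact_Om.isClosed
  | (_ + 1) => isClosed_closure

lemma F_mem_Om {x : Fin d → ℝ} (hx : x ∈ T.Om) : T.F x ∈ T.Om :=
  T.translate_mem _ x (T.idx_mem x hx)

lemma OmSeq_antitone : Antitone T.OmSeq := by
  apply antitone_nat_of_succ_le
  intro n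
  induction n with
  | zero =>
    refine closure_minimal ?_ T.compact_Om.isClosed
    rintro _ ⟨x, hx, rfl⟩
    exact F_mem_Om T hx
  | succ n ih =>
    exact closure_mono (Set.image_mono ih)

lemma OmSeq_subset_Om (n : ℕ) : T.OmSeq n ⊆ T.Om := OmSeq_antitone T (Nat.zero_le n)

lemma attractor_subset : T.attractor ⊆ T.Om := Set.iInter_subset _ 0

lemma isClosed_attractor : IsClosed T.attractor :=
  isClosed_iInter (isClosed_OmSeq T)

lemma exists_branch_of_mem_OmSeq_succ {n : ℕ} {y : Fin d → ℝ} (hy : y ∈ T.OmSeq (n + 1)) :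
    ∃ i, y - T.v i ∈ T.OmSeq n ∩ T.P i := by
  have hU : IsClosed (⋃ i, (fun x => x + T.v i) '' (T.OmSeq n ∩ T.P i)) := by
    refine isClosed_iUnion_of_finite fun i => ?_
    exact (((T.compact_P i).inter_left (isClosed_OmSeq T n)).image
      (continuous_id.add continuous_const)).isClosed
  have hsub : T.F '' T.OmSeq n ⊆ ⋃ i, (fun x => x + T.v i) '' (T.OmSeq n ∩ T.P i) := by
    rintro _ ⟨x, hx, rfl⟩
    exact Set.mem_iUnion.2 ⟨T.idx x, ⟨x, ⟨hx, T.idx_mem x (OmSeq_subset_Om T n hx)⟩, rfl⟩⟩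
  have hy' : y ∈ ⋃ i, (fun x => x + T.v i) '' (T.OmSeq n ∩ T.P i) :=
    closure_minimal hsub hU hy
  obtain ⟨i, x, hx, hxe⟩ := Set.mem_iUnion.1 hy'
  exact ⟨i, by rw [← hxe]; simpa [add_sub_cancel_right] using hx⟩

lemma exists_branch_attractor {y : Fin d → ℝ} (hy : y ∈ T.attractor) :
    ∃ i, y - T.v i ∈ T.attractor ∩ T.P i := by
  by_contra hcon
  push_neg at hcon
  have h' : ∀ i, ∃ n, y - T.v i ∉ T.OmSeq n ∩ T.P i := by
    intro i
    by_cases hp : y - T.v i ∈ T.P i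
    · have : y - T.v i ∉ T.attractor := fun ha => hcon i ⟨ha, hp⟩
      rw [PWT.attractor, Set.mem_iInter] at this
      push_neg at this
      obtain ⟨n, hn⟩ := this
      exact ⟨n, fun hmem => hn hmem.1⟩
    · exact ⟨0, fun hmem => hp hmem.2⟩
  choose f hf using h'
  set N := Finset.univ.sup f with hN
  have hyN : y ∈ T.OmSeq (N + 1) := Set.mem_iInter.1 hy (N + 1)
  obtain ⟨i, hi⟩ := exists_branch_of_mem_OmSeq_succ T hyN
  exact hf i ⟨OmSeq_antitone T (Finset.le_sup (Finset.mem_univ i)) hi.1, hi.2⟩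

lemma idx_eq {x : Fin d → ℝ} {i : Fin (d + 1)} (hxi : x ∈ T.P i)
    (hx : ∀ j, x ∉ frontier (T.P j)) : T.idx x = i := by
  have hOm : x ∈ T.Om := T.union_P ▸ Set.mem_iUnion.2 ⟨i, hxi⟩
  have hint : ∀ j, x ∈ T.P j → x ∈ interior (T.P j) := by
    intro j hj
    by_contra h'
    exact hx j ⟨subset_closure hj, h'⟩
  by_contra hne
  have h1 := hint _ (T.idx_mem x hOm)
  have h2 := hint i hxi
  have hd := T.disj_P (T.idx x) i hne
  exact absurd (Set.mem_inter h1 h2) (by rw [hd]; exact Set.notMem_empty x)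

lemma continuous_minv : Continuous (fun x : Fin d → ℝ => T.latMatrix⁻¹.mulVec x) :=
  (Matrix.mulVecLin T.latMatrix⁻¹).continuous_of_finiteDimensional

lemma continuous_torusProj : Continuous T.torusProj :=
  continuous_pi fun i =>
    (AddCircle.continuous_mk' 1).comp ((continuous_apply i).comp (continuous_minv T))

lemma fiber_inter_Om_finite (h : IsUnit T.latMatrix) (φ : Fin d → AddCircle (1:ℝ)) :
    (T.torusProj ⁻¹' {φ} ∩ T.Om).Finite := by
  set S := T.torusProj ⁻¹' {φ} ∩ T.Om with hS
  rcases S.eq_empty_or_nonempty with hSe | ⟨x₀, hx₀⟩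
  · simp [hSe]
  obtain ⟨r, hr⟩ : ∃ r, ∀ x ∈ T.Om, ‖T.latMatrix⁻¹.mulVec x‖ ≤ r := by
    obtain ⟨r, hr⟩ := (((T.compact_Om).image (continuous_minv T)).isBounded).subset_closedBall 0
    exact ⟨r, fun x hx => by
      simpa using mem_closedBall_zero_iff.1 (hr ⟨x, hx, rfl⟩)⟩
  set g : (Fin d → ℝ) → (Fin d → ℤ) :=
    fun x i => ⌊T.latMatrix⁻¹.mulVec x i - T.latMatrix⁻¹.mulVec x₀ i⌋ with hg
  have key : ∀ x ∈ S, ∀ i, ((g x i : ℝ)) =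
      T.latMatrix⁻¹.mulVec x i - T.latMatrix⁻¹.mulVec x₀ i := by
    intro x hx i
    have hx' : T.torusProj x = T.torusProj x₀ := by
      have h1 : T.torusProj x = φ := hx.1
      have h2 : T.torusProj x₀ = φ := hx₀.1
      rw [h1, h2]
    obtain ⟨n, hn⟩ := (torusProj_eq_iff T x x₀).1 hx' i
    rw [hg]; simp only
    rw [← hn, Int.floor_intCast]
  apply Set.Finite.of_finite_image (f := g) ?_ ?_
  · apply Set.Finite.subset (Set.Finite.pi (fun _ : Fin d => Set.finite_Icc (-⌈2 * r⌉) ⌈2 * r⌉))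
    rintro _ ⟨x, hx, rfl⟩
    rw [Set.mem_univ_pi]
    intro i
    have hb : |(g x i : ℝ)| ≤ 2 * r := by
      rw [key x hx i]
      have hx1 : |T.latMatrix⁻¹.mulVec x i| ≤ r := by
        calc |T.latMatrix⁻¹.mulVec x i| ≤ ‖T.latMatrix⁻¹.mulVec x‖ := by
              rw [← Real.norm_eq_abs]; exact norm_le_pi_norm _ i
          _ ≤ r := hr x hx.2
      have hx2 : |T.latMatrix⁻¹.mulVec x₀ i| ≤ r := by
        calc |T.latMatrix⁻¹.mulVec x₀ i| ≤ ‖T.latMatrix⁻¹.mulVec x₀‖ := by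
              rw [← Real.norm_eq_abs]; exact norm_le_pi_norm _ i
          _ ≤ r := hr x₀ hx₀.2
      calc |T.latMatrix⁻¹.mulVec x i - T.latMatrix⁻¹.mulVec x₀ i|
          ≤ |T.latMatrix⁻¹.mulVec x i| + |T.latMatrix⁻¹.mulVec x₀ i| := abs_sub _ _
        _ ≤ 2 * r := by linarith
    rw [Set.mem_Icc]
    constructor
    · have : -(⌈2*r⌉ : ℝ) ≤ (g x i : ℝ) := by
        have := (abs_le.1 hb).1
        have h2 : (2*r : ℝ) ≤ ⌈2*r⌉ := Int.le_ceil _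
        linarith
      exact_mod_cast this
    · have : ((g x i : ℝ)) ≤ (⌈2*r⌉ : ℝ) := (abs_le.1 hb).2.trans (Int.le_ceil _)
      exact_mod_cast this
  · intro x hx y hy hxy
    apply minv_injective T h
    funext i
    have h1 := key x hx i
    have h2 := key y hy i
    rw [hxy] at h1
    have := h1.symm.trans h2
    linarith [this]

end PWTAux

namespace PWTAux

variable {d : ℕ} (T : PWT d (d + 1))

lemma fiber_inter_attractor_finite (h : IsUnit T.latMatrix) (φ : Fin d → AddCircle (1:ℝ)) :
    (T.torusProj ⁻¹' {φ} ∩ T.attractor).Finite :=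
  (fiber_inter_Om_finite T h φ).subset
    (Set.inter_subset_inter_right _ (attractor_subset T))

lemma isClosed_Sk (h : IsUnit T.latMatrix) (k : ℕ) :
    IsClosed {φ : Fin d → AddCircle (1:ℝ) |
      k ≤ (T.torusProj ⁻¹' {φ} ∩ T.attractor).ncard} := by
  set W : Set ((Fin d → AddCircle (1:ℝ)) × (Fin k → Fin d → ℝ)) :=
    {p | (∀ a, p.2 a ∈ T.attractor) ∧ (∀ a, T.torusProj (p.2 a) = p.1) ∧
      ∀ a b, a ≠ b → 1 ≤ ‖T.latMatrix⁻¹.mulVec (p.2 a) - T.latMatrix⁻¹.mulVec (p.2 b)‖} with hW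
  have hc1 : IsClosed {p : (Fin d → AddCircle (1:ℝ)) × (Fin k → Fin d → ℝ) |
      ∀ a, p.2 a ∈ T.attractor} := by
    rw [Set.setOf_forall]
    exact isClosed_iInter fun a =>
      (isClosed_attractor T).preimage ((continuous_apply a).comp continuous_snd)
  have hc2 : IsClosed {p : (Fin d → AddCircle (1:ℝ)) × (Fin k → Fin d → ℝ) |
      ∀ a, T.torusProj (p.2 a) = p.1} := by
    rw [Set.setOf_forall]
    exact isClosed_iInter fun a => isClosed_eq
      ((continuous_torusProj T).comp ((continuous_apply a).comp continuous_snd))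
      continuous_fst
  have hc3 : IsClosed {p : (Fin d → AddCircle (1:ℝ)) × (Fin k → Fin d → ℝ) |
      ∀ a b, a ≠ b → 1 ≤ ‖T.latMatrix⁻¹.mulVec (p.2 a) - T.latMatrix⁻¹.mulVec (p.2 b)‖} := by
    rw [Set.setOf_forall]
    refine isClosed_iInter fun a => ?_
    rw [Set.setOf_forall]
    refine isClosed_iInter fun b => ?_
    by_cases hab : a = b
    · simp [hab]
    · have heq : {p : (Fin d → AddCircle (1:ℝ)) × (Fin k → Fin d → ℝ) |
          a ≠ b → 1 ≤ ‖T.latMatrix⁻¹.mulVec (p.2 a) - T.latMatrix⁻¹.mulVec (p.2 b)‖}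
          = {p | 1 ≤ ‖T.latMatrix⁻¹.mulVec (p.2 a) - T.latMatrix⁻¹.mulVec (p.2 b)‖} := by
        ext p; simp [hab]
      rw [heq]
      apply isClosed_le continuous_const
      apply Continuous.norm
      exact ((continuous_minv T).comp ((continuous_apply a).comp continuous_snd)).sub
        ((continuous_minv T).comp ((continuous_apply b).comp continuous_snd))
  have hWclosed : IsClosed W := by
    rw [hW, Set.setOf_and, Set.setOf_and]
    exact hc1.inter (hc2.inter hc3)
  have hWcompact : IsCompact W := by
    refine IsCompact.of_isClosed_subset
      (isCompact_univ.prod (isCompact_univ_pi fun _ : Fin k => T.compact_Om)) hWclosed ?_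
    rintro p ⟨h1, -, -⟩
    exact ⟨Set.mem_univ _, Set.mem_univ_pi.2 fun a => attractor_subset T (h1 a)⟩
  have hEq : {φ : Fin d → AddCircle (1:ℝ) |
      k ≤ (T.torusProj ⁻¹' {φ} ∩ T.attractor).ncard} = Prod.fst '' W := by
    ext φ
    simp only [Set.mem_setOf_eq, Set.mem_image]
    constructor
    · intro hk
      rcases Nat.eq_zero_or_pos k with rfl | hkpos
      · exact ⟨(φ, fun _ => 0), ⟨fun a => a.elim0, fun a => a.elim0, fun a => a.elim0⟩, rfl⟩
      have hfin : (T.torusProj ⁻¹' {φ} ∩ T.attractor).Finite :=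
        fiber_inter_attractor_finite T h φ
      obtain ⟨t, hts, htk⟩ := Set.exists_subset_card_eq hk
      have htfin : t.Finite := hfin.subset hts
      have hcard : htfin.toFinset.card = k := by
        rw [← htk, Set.ncard_eq_toFinset_card t htfin]
      set e := Finset.equivFinOfCardEq hcard with he
      refine ⟨(φ, fun a => (e.symm a : Fin d → ℝ)), ⟨?_, ?_, ?_⟩, rfl⟩
      · intro a
        have := (e.symm a).2
        rw [Set.Finite.mem_toFinset] at this
        exact (hts this).2
      · intro a
        have := (e.symm a).2
        rw [Set.Finite.mem_toFinset] at this
        exact (hts this).1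
      · intro a b hab
        have hne : ((e.symm a : Fin d → ℝ)) ≠ (e.symm b : Fin d → ℝ) := by
          intro hcontra
          exact hab (by
            have : e.symm a = e.symm b := Subtype.ext hcontra
            simpa using congrArg e this)
        have hma := (e.symm a).2
        have hmb := (e.symm b).2
        rw [Set.Finite.mem_toFinset] at hma hmb
        have hπ : T.torusProj (e.symm a : Fin d → ℝ) = T.torusProj (e.symm b : Fin d → ℝ) := by
          have h1 : T.torusProj (e.symm a : Fin d → ℝ) = φ := (hts hma).1
          have h2 : T.torusProj (e.symm b : Fin d → ℝ) = φ := (hts hmb).1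
          rw [h1, h2]
        obtain hint := (torusProj_eq_iff T _ _).1 hπ
        apply one_le_norm_of_int_coords
        · intro hzero
          apply hne
          apply minv_injective T h
          exact sub_eq_zero.1 hzero
        · intro i
          obtain ⟨n, hn⟩ := hint i
          exact ⟨n, by rw [hn]; simp⟩
    · rintro ⟨p, ⟨h1, h2, h3⟩, rfl⟩
      have hinj : Function.Injective p.2 := by
        intro a b hab
        by_contra hne
        have hthis := h3 a b hne
        rw [hab, sub_self, norm_zero] at hthis
        linarith
      have hsub : Set.range p.2 ⊆ T.torusProj ⁻¹' {p.1} ∩ T.attractor := by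
        rintro _ ⟨a, rfl⟩
        exact ⟨h2 a, h1 a⟩
      calc k = (Set.range p.2).ncard := by
              rw [← Set.image_univ, Set.ncard_image_of_injective _ hinj, Set.ncard_univ]
              simp
        _ ≤ (T.torusProj ⁻¹' {p.1} ∩ T.attractor).ncard :=
              Set.ncard_le_ncard hsub (fiber_inter_attractor_finite T h p.1)
  rw [hEq]
  exact (hWcompact.image continuous_fst).isClosed

end PWTAux

namespace PWTAux

variable {d : ℕ}

/-- The coordinatewise quotient map to the torus. -/
noncomputable def Qmap (d : ℕ) : (Fin d → ℝ) → (Fin d → AddCircle (1:ℝ)) :=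
  fun x i => (x i : AddCircle (1:ℝ))

lemma measurable_Qmap : Measurable (Qmap d) :=
  measurable_pi_lambda _ fun i => (AddCircle.measurable_mk' (a := (1:ℝ))).comp (measurable_pi_apply i)

lemma map_Qmap_eq :
    Measure.map (Qmap d) (volume.restrict (Set.pi Set.univ fun _ : Fin d => Set.Ioc (0:ℝ) 1))
      = volume := by
  have hpi : Measure.map (Qmap d)
      (volume.restrict (Set.pi Set.univ fun _ : Fin d => Set.Ioc (0:ℝ) 1))
      = Measure.pi fun _ : Fin d => (volume : Measure (AddCircle (1:ℝ))) := by
    refine (Measure.pi_eq (μ := fun _ : Fin d => (volume : Measure (AddCircle (1:ℝ)))) fun s hs => ?_).symm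
    rw [Measure.map_apply measurable_Qmap (MeasurableSet.univ_pi hs)]
    have hpre : Qmap d ⁻¹' (Set.pi Set.univ s)
        = Set.pi Set.univ fun i => ((↑) : ℝ → AddCircle (1:ℝ)) ⁻¹' (s i) := by
      ext x
      simp [Qmap, Set.mem_pi]
    rw [hpre, Measure.restrict_apply (MeasurableSet.univ_pi fun i =>
      (AddCircle.measurable_mk' (a := (1:ℝ))) (hs i)), ← Set.pi_inter_distrib, volume_pi_pi]
    congr 1
    funext i
    have := (AddCircle.measurePreserving_mk (1:ℝ) (0:ℝ)).measure_preimage (hs i).nullMeasurableSet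
    rw [Measure.restrict_apply ((AddCircle.measurable_mk' (a := (1:ℝ))) (hs i))] at this
    rw [zero_add] at this
    exact this
  rw [hpi]
  exact (volume_pi (α := fun _ : Fin d => AddCircle (1:ℝ))).symm

lemma Qmap_preimage_image_subset (S : Set (Fin d → ℝ)) :
    Qmap d ⁻¹' (Qmap d '' S) ⊆
      ⋃ n : Fin d → ℤ, (fun x => x + fun i => ((n i : ℝ))) ⁻¹' S := by
  intro x hx
  obtain ⟨y, hyS, hyx⟩ := hx
  have : ∀ i, ∃ m : ℤ, (m : ℝ) = y i - x i := by
    intro i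
    have := congrFun hyx i
    exact (coe_eq_coe_iff _ _).1 this
  choose n hn using this
  refine Set.mem_iUnion.2 ⟨n, ?_⟩
  have : x + (fun i => ((n i : ℝ))) = y := by
    funext i
    have := hn i
    simp only [Pi.add_apply]
    linarith
  simpa [Set.mem_preimage, this] using hyS

variable (T : PWT d (d + 1))

lemma badImage_null :
    volume (T.torusProj '' (⋃ i, frontier (T.P i))) = 0 := by
  set B := ⋃ i, frontier (T.P i) with hB
  have hBcomp : IsCompact B := by
    rw [hB]
    apply isCompact_iUnion
    intro i
    exact IsCompact.of_isClosed_subset (T.compact_P i) isClosed_frontier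
      (T.compact_P i).isClosed.frontier_subset
  have hBnull : volume B = 0 := measure_iUnion_null T.null_bd_P
  -- image under the linear map
  have hgB : volume ((fun x => T.latMatrix⁻¹.mulVec x) '' B) = 0 := by
    have := Measure.addHaar_image_linearMap (μ := volume) (Matrix.mulVecLin T.latMatrix⁻¹) B
    rw [hBnull, mul_zero] at this
    exact this
  -- torusProj = Qmap ∘ minv
  have hfact : T.torusProj '' B = Qmap d '' ((fun x => T.latMatrix⁻¹.mulVec x) '' B) := by
    rw [← Set.image_comp]
    rfl
  have hmeas : MeasurableSet (T.torusProj '' B) :=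
    ((hBcomp.image (continuous_torusProj T)).isClosed).measurableSet
  rw [← map_Qmap_eq, Measure.map_apply measurable_Qmap hmeas]
  refine le_antisymm ?_ (zero_le)
  calc (volume.restrict (Set.pi Set.univ fun _ : Fin d => Set.Ioc (0:ℝ) 1))
        (Qmap d ⁻¹' (T.torusProj '' B))
      ≤ volume (Qmap d ⁻¹' (T.torusProj '' B)) :=
        Measure.restrict_le_self _
    _ ≤ volume (⋃ n : Fin d → ℤ,
          (fun x => x + fun i => ((n i : ℝ))) ⁻¹' ((fun x => T.latMatrix⁻¹.mulVec x) '' B)) := by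
        apply measure_mono
        rw [hfact]
        exact Qmap_preimage_image_subset _
    _ = 0 := by
        refine measure_iUnion_null fun n => ?_
        rw [measure_preimage_add_right]
        exact hgB

end PWTAux


/-- If the torus rotation factor `R(φ) = φ + π(v_0)` is ergodic, then the
fiber-counting function `ξ(φ) = card(π⁻¹(φ) ∩ A)` is constant for Haar-almost every
`φ` in the torus. -/
theorem pwt_fiber_card_ae_const {d : ℕ} (T : PWT d (d + 1))
    (hrank : LinearIndependent ℝ (fun i : Fin d => T.v i.succ - T.v 0))
    (herg : Ergodic (fun φ : Fin d → AddCircle (1 : ℝ) => φ + T.torusProj (T.v 0)) volume) :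
    ∃ c : ℕ, ∀ᵐ φ ∂(volume : Measure (Fin d → AddCircle (1 : ℝ))),
      (T.torusProj ⁻¹' {φ} ∩ T.attractor).ncard = c := by
  classical
  have hM : IsUnit T.latMatrix := PWTAux.isUnit_latMatrix T hrank
  set ξ : (Fin d → AddCircle (1:ℝ)) → ℕ :=
    fun φ => (T.torusProj ⁻¹' {φ} ∩ T.attractor).ncard with hξ
  set S : ℕ → Set (Fin d → AddCircle (1:ℝ)) := fun k => {φ | k ≤ ξ φ} with hSdef
  haveI hprob : IsProbabilityMeasure (volume : Measure (Fin d → AddCircle (1:ℝ))) := by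
    constructor
    have huniv : volume (Set.pi Set.univ fun _ : Fin d => (Set.univ : Set (AddCircle (1:ℝ)))) = 1 := by
      rw [volume_pi_pi]
      simp [AddCircle.measure_univ]
    rw [Set.pi_univ] at huniv
    exact huniv
  have hbad := PWTAux.badImage_null T
  -- monotonicity of the fibre count along the rotation, off the bad set
  have hmono : ∀ φ : Fin d → AddCircle (1:ℝ),
      φ ∉ T.torusProj '' (⋃ i, frontier (T.P i)) →
      ξ (φ + T.torusProj (T.v 0)) ≤ ξ φ := by
    intro φ hφ
    set f : (Fin d → ℝ) → (Fin d → ℝ) := fun y =>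
      if h : y ∈ T.attractor then y - T.v (PWTAux.exists_branch_attractor T h).choose
      else 0 with hf
    have hfprop : ∀ y ∈ T.torusProj ⁻¹' {φ + T.torusProj (T.v 0)} ∩ T.attractor,
        f y ∈ (T.torusProj ⁻¹' {φ} ∩ T.attractor) ∧ T.F (f y) = y := by
      intro y hy
      have hyA : y ∈ T.attractor := hy.2
      have hspec := (PWTAux.exists_branch_attractor T hyA).choose_spec
      set i := (PWTAux.exists_branch_attractor T hyA).choose with hi
      have hfy : f y = y - T.v i := by rw [hf]; simp [hyA]; rfl
      have hA : f y ∈ T.attractor := by rw [hfy]; exact hspec.1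
      have hPi : f y ∈ T.P i := by rw [hfy]; exact hspec.2
      have hπ : T.torusProj (f y) = φ := by
        have h2 : f y + T.v i = y := by rw [hfy]; abel
        have h1 : T.torusProj (f y + T.v i) = T.torusProj (f y) + T.torusProj (T.v 0) := by
          rw [PWTAux.torusProj_add, PWTAux.torusProj_v T hM]
        rw [h2] at h1
        have h3 : T.torusProj y = φ + T.torusProj (T.v 0) :=
          Set.mem_singleton_iff.1 hy.1
        exact add_right_cancel (h1.symm.trans h3)
      refine ⟨⟨hπ, hA⟩, ?_⟩
      have hnb : ∀ j, f y ∉ frontier (T.P j) := by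
        intro j hj
        exact hφ ⟨f y, Set.mem_iUnion.2 ⟨j, hj⟩, hπ⟩
      have hidx : T.idx (f y) = i := PWTAux.idx_eq T hPi hnb
      rw [PWT.F, hidx, hfy]
      abel
    refine Set.ncard_le_ncard_of_injOn f (fun y hy => (hfprop y hy).1) ?_
      (PWTAux.fiber_inter_attractor_finite T hM φ)
    intro y1 h1 y2 h2 he
    calc y1 = T.F (f y1) := ((hfprop y1 h1).2).symm
      _ = T.F (f y2) := by rw [he]
      _ = y2 := (hfprop y2 h2).2
  have hSmeas : ∀ k, MeasurableSet (S k) := fun k =>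
    (PWTAux.isClosed_Sk T hM k).measurableSet
  have hdich : ∀ k, volume (S k) = 0 ∨ volume (S k) = 1 := by
    intro k
    have hsub : ((fun φ : Fin d → AddCircle (1:ℝ) => φ + T.torusProj (T.v 0)) ⁻¹' S k) \ S k
        ⊆ T.torusProj '' (⋃ i, frontier (T.P i)) := by
      intro φ hφ
      by_contra hc
      exact hφ.2 (le_trans hφ.1 (hmono φ hc))
    have hle : ((fun φ : Fin d → AddCircle (1:ℝ) => φ + T.torusProj (T.v 0)) ⁻¹' S k)
        ≤ᵐ[volume] S k := by
      rw [MeasureTheory.ae_le_set]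
      exact measure_mono_null hsub hbad
    rcases herg.ae_empty_or_univ_of_preimage_ae_le (hSmeas k).nullMeasurableSet hle with h | h
    · left; rw [measure_congr h, measure_empty]
    · right; rw [measure_congr h, measure_univ]
  have hex : ∃ k, volume (S k) = 0 := by
    by_contra hc
    push_neg at hc
    have hall : ∀ k, volume (S k) = 1 := fun k => (hdich k).resolve_left (hc k)
    have hint : ⋂ k, S k = ∅ := by
      ext φ
      simp only [Set.mem_iInter, hSdef, Set.mem_setOf_eq, Set.mem_empty_iff_false, iff_false,
        not_forall, not_le]
      exact ⟨ξ φ + 1, by omega⟩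
    have h0 : volume ((⋂ k, S k)ᶜ) = 0 := by
      rw [Set.compl_iInter]
      exact measure_iUnion_null fun k => (prob_compl_eq_zero_iff (hSmeas k)).2 (hall k)
    rw [hint, Set.compl_empty, measure_univ] at h0
    exact one_ne_zero h0
  set k₀ := Nat.find hex with hk₀def
  have hk₀0 : volume (S k₀) = 0 := Nat.find_spec hex
  have hk₀pos : 0 < k₀ := by
    rcases Nat.eq_zero_or_pos k₀ with h0 | h
    · exfalso
      have hS0 : S 0 = Set.univ := by
        ext φ; simp [hSdef]
      rw [h0, hS0, measure_univ] at hk₀0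
      exact one_ne_zero hk₀0
    · exact h
  have hprev : volume (S (k₀ - 1)) = 1 :=
    (hdich _).resolve_left (Nat.find_min hex (by omega))
  refine ⟨k₀ - 1, ?_⟩
  have h1 : ∀ᵐ φ ∂(volume : Measure (Fin d → AddCircle (1:ℝ))), φ ∈ S (k₀ - 1) := by
    have hc : volume ((S (k₀ - 1))ᶜ) = 0 := (prob_compl_eq_zero_iff (hSmeas _)).2 hprev
    exact (measure_eq_zero_iff_ae_notMem.1 hc).mono fun φ hφ => by simpa using hφ
  have h2 : ∀ᵐ φ ∂(volume : Measure (Fin d → AddCircle (1:ℝ))), φ ∉ S k₀ :=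
    measure_eq_zero_iff_ae_notMem.1 hk₀0
  filter_upwards [h1, h2] with φ hφ1 hφ2
  simp only [hSdef, Set.mem_setOf_eq, not_le] at hφ1 hφ2
  show ξ φ = k₀ - 1
  omega
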